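/- Let β ∈ R satisfy B_R(β,β) = 2, set M = A₂⊗ℤβ inside A₂⊗R, and let Ann(M) = {x ∈ A₂⊗R : B(x,m) = 0 for all m ∈ M}. Then: (a) 2(A₂⊗R) ⊆ M + Ann(M), i.e. M is an RSSD sublattice of A₂⊗R; and (b) the map id_{A₂}⊗r_β sends every element of M to its negative and fixes every element of Ann(M) pointwise; hence id_{A₂}⊗r_β coincides with the RSSD involution t_M of A₂⊗R, which acts as −1 on M and +1 on Ann(M). -/

import Mathlib

open TensorProduct

/-- The bilinear form of the `A₂` root lattice realized on `ℤ²` with Gram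
matrix `[[2,−1],[−1,2]]`. -/
def B2 (v w : ℤ × ℤ) : ℤ :=
  2 * v.1 * w.1 - v.1 * w.2 - v.2 * w.1 + 2 * v.2 * w.2

/-- The annihilator `Ann(N) = {x : Bt(x, N) = 0}` of a submodule `N` with
respect to a bilinear form `Bt`. -/
def annih {M : Type*} [AddCommGroup M] [Module ℤ M]
    (Bt : M →ₗ[ℤ] M →ₗ[ℤ] ℤ) (N : Submodule ℤ M) : Submodule ℤ M where
  carrier := {x | ∀ m ∈ N, Bt x m = 0}
  add_mem' := by
    intro a b ha hb m hm
    rw [map_add, LinearMap.add_apply, ha m hm, hb m hm, add_zero]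
  zero_mem' := by intro m hm; simp
  smul_mem' := by
    intro c x hx m hm
    simp [hx m hm]

/-- The sublattice `M = A₂ ⊗ ℤβ` of `A₂ ⊗ R`. -/
def A2beta (R : Type*) [AddCommGroup R] [Module ℤ R] (β : R) :
    Submodule ℤ ((ℤ × ℤ) ⊗[ℤ] R) :=
  Submodule.span ℤ {z : (ℤ × ℤ) ⊗[ℤ] R | ∃ a : ℤ × ℤ, z = a ⊗ₜ[ℤ] β}

/-- Auxiliary linear map `φ : A₂⊗R → A₂`, `a ⊗ r ↦ B_R(β,r) • a`. -/
noncomputable def phiAux (R : Type*) [AddCommGroup R] [Module ℤ R]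
    (BR : R →ₗ[ℤ] R →ₗ[ℤ] ℤ) (β : R) :
    ((ℤ × ℤ) ⊗[ℤ] R) →ₗ[ℤ] (ℤ × ℤ) :=
  TensorProduct.lift (LinearMap.mk₂ ℤ (fun a r => (BR β r) • a)
    (fun a b r => by show BR β r • (a + b) = _ • a + _ • b; rw [smul_add])
    (fun c a r => by
      show BR β r • (c • a) = c • (BR β r • a); rw [smul_comm])
    (fun a r s => by
      show BR β (r + s) • a = BR β r • a + BR β s • a; rw [map_add, add_smul])
    (fun c a r => by
      beta_reduce
      rw [LinearMap.map_smul, smul_assoc]))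

theorem phiAux_tmul (R : Type*) [AddCommGroup R] [Module ℤ R]
    (BR : R →ₗ[ℤ] R →ₗ[ℤ] ℤ) (β : R) (a : ℤ × ℤ) (r : R) :
    phiAux R BR β (a ⊗ₜ[ℤ] r) = BR β r • a := rfl

theorem stmt_16 (R : Type*) [AddCommGroup R] [Module ℤ R]
    (BR : R →ₗ[ℤ] R →ₗ[ℤ] ℤ)
    (hBRsymm : ∀ x y, BR x y = BR y x)
    (Bt : ((ℤ × ℤ) ⊗[ℤ] R) →ₗ[ℤ] ((ℤ × ℤ) ⊗[ℤ] R) →ₗ[ℤ] ℤ)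
    (hBt : ∀ (a a' : ℤ × ℤ) (r r' : R),
      Bt (a ⊗ₜ[ℤ] r) (a' ⊗ₜ[ℤ] r') = B2 a a' * BR r r')
    (β : R) (hβ : BR β β = 2) :
    (∀ x : (ℤ × ℤ) ⊗[ℤ] R,
      (2 : ℤ) • x ∈ A2beta R β ⊔ annih Bt (A2beta R β)) ∧
    (∀ m ∈ A2beta R β,
      TensorProduct.map LinearMap.id
        (LinearMap.id - @LinearMap.smulRight ℤ ℤ R R _ _ _ _ _ _ _ _
          (@IsScalarTower.left ℤ R _ Module.toDistribMulAction.toMulAction) (BR β) β) m = -m) ∧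
    (∀ x ∈ annih Bt (A2beta R β),
      TensorProduct.map LinearMap.id
        (LinearMap.id - @LinearMap.smulRight ℤ ℤ R R _ _ _ _ _ _ _ _
          (@IsScalarTower.left ℤ R _ Module.toDistribMulAction.toMulAction) (BR β) β) x = x) := by
  set M := A2beta R β with hM
  have hmemM : ∀ a : ℤ × ℤ, (a ⊗ₜ[ℤ] β) ∈ M := fun a =>
    Submodule.subset_span ⟨a, rfl⟩
  set g := TensorProduct.map (LinearMap.id : (ℤ×ℤ) →ₗ[ℤ] (ℤ×ℤ)) (@LinearMap.smulRight ℤ ℤ R R _ _ _ _ _ _ _ _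
          (@IsScalarTower.left ℤ R _ Module.toDistribMulAction.toMulAction) (BR β) β) with hg
  have hgphi : ∀ x, g x = (phiAux R BR β x) ⊗ₜ[ℤ] β := by
    intro x
    induction x using TensorProduct.induction_on with
    | zero => simp
    | tmul a r =>
        simp only [hg, phiAux_tmul, TensorProduct.map_tmul,
          LinearMap.mk₂_apply, LinearMap.id_coe, id_eq, LinearMap.smulRight_apply]
        haveI := @IsScalarTower.left ℤ R _ Module.toDistribMulAction.toMulAction
        exact (TensorProduct.smul_tmul _ _ _).symm
    | add x y hx hy =>
        simp [map_add, hx, hy, TensorProduct.add_tmul]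
  have hBtphi : ∀ (x) (a' : ℤ × ℤ),
      Bt x (a' ⊗ₜ[ℤ] β) = B2 (phiAux R BR β x) a' := by
    intro x a'
    induction x using TensorProduct.induction_on with
    | zero => simp [B2]
    | tmul a r =>
        simp only [hBt, phiAux_tmul]
        rw [hBRsymm r β]
        cases a; simp [B2, Prod.smul_def]; ring
    | add x y hx hy =>
        rw [map_add, LinearMap.add_apply, hx, hy, map_add]
        cases (phiAux R BR β x); cases (phiAux R BR β y)
        simp [B2, Prod.fst_add, Prod.snd_add]; ring
  have hsplit : ∀ x, TensorProduct.map (LinearMap.id : (ℤ×ℤ) →ₗ[ℤ] (ℤ×ℤ))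
      (LinearMap.id - @LinearMap.smulRight ℤ ℤ R R _ _ _ _ _ _ _ _
          (@IsScalarTower.left ℤ R _ Module.toDistribMulAction.toMulAction) (BR β) β) x = x - g x := by
    intro x
    induction x using TensorProduct.induction_on with
    | zero => simp
    | tmul a r =>
        simp [hg, TensorProduct.map_tmul, TensorProduct.tmul_sub]
    | add x y hx hy =>
        rw [map_add, hx, hy, map_add]; abel
  refine ⟨?_, ?_, ?_⟩
  · -- part (a): 2 • x = g x + (2 • x - g x)
    intro x
    have hdecomp : (2:ℤ) • x = g x + ((2:ℤ) • x - g x) := by abel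
    rw [hdecomp]
    refine Submodule.add_mem _
      (Submodule.mem_sup_left ?_) (Submodule.mem_sup_right ?_)
    · rw [hgphi]; exact hmemM _
    · intro m hm
      have hker : M ≤ LinearMap.ker (Bt ((2:ℤ) • x - g x)) := by
        rw [hM, A2beta, Submodule.span_le]
        rintro z ⟨a', rfl⟩
        simp only [SetLike.mem_coe, LinearMap.mem_ker, map_sub, map_smul,
          LinearMap.sub_apply, LinearMap.smul_apply]
        rw [hBtphi, hgphi, hBt, hβ]
        rw [smul_eq_mul]; ring
      exact hker hm
  · -- part (b)
    intro m hm
    induction hm using Submodule.span_induction with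
    | mem z hz =>
        obtain ⟨a, rfl⟩ := hz
        rw [hsplit, hgphi]
        have h2a : phiAux R BR β (a ⊗ₜ[ℤ] β) = (2:ℤ) • a := by
          simp [phiAux_tmul, hβ]
        rw [h2a, two_smul, TensorProduct.add_tmul]
        abel
    | zero => simp
    | add x y _ _ hx hy => rw [map_add, hx, hy]; abel
    | smul c x _ hx => rw [map_smul, hx, smul_neg]
  · -- part (c)
    intro x hx
    have h1 : Bt x (((1,0) : ℤ×ℤ) ⊗ₜ[ℤ] β) = 0 := hx _ (hmemM _)
    have h2 : Bt x (((0,1) : ℤ×ℤ) ⊗ₜ[ℤ] β) = 0 := hx _ (hmemM _)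
    rw [hBtphi] at h1 h2
    have hphi0 : phiAux R BR β x = 0 := by
      simp only [B2] at h1 h2
      have hfst : (phiAux R BR β x).1 = 0 := by omega
      have hsnd : (phiAux R BR β x).2 = 0 := by omega
      exact Prod.ext hfst hsnd
    rw [hsplit, hgphi, hphi0, TensorProduct.zero_tmul, sub_zero]
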